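/- Variational characterization: among even smooth probability densities p on [−1,1] with p(±1)=0, a critical point of the Fisher information I(p) = ∫_{−1}^1 p'^2/p dx under the constraint ∫_{−1}^1 p = 1 must satisfy the ODE 2(p'/p)'(x) + (p'(x)/p(x))^2 + λ^2 = 0 for some λ, whose even solution vanishing at ±1 is p(x) = cos^2(πx/2) (with λ = π); equivalently β := (ln p)' satisfies 2β' + β^2 + λ^2 = 0 with β(0)=0 and β(x) = −λ tan(λx/2). -/

import Mathlib

open Real Set Filter

/-- variational characterization. If `β = (ln p)'` satisfies the
Euler–Lagrange equation `2β' + β² + λ² = 0` of the constrained Fisher information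
minimization on `(−1,1)`, with the evenness condition `β(0) = 0` and the boundary
condition that `p` vanishes at `±1` (i.e. `β` explodes to `∓∞` at `±1`), then
necessarily `λ = π`, `β(x) = −λ tan(λx/2) = −π tan(πx/2)`, and the corresponding
density is `p(x) = cos²(πx/2)`: it has logarithmic derivative `β` on `(−1,1)` and
total mass `1`. -/
theorem fisher_info_critical_point (lam : ℝ) (hlam : 0 < lam) (β : ℝ → ℝ)
    (hODE : ∀ x ∈ Ioo (-1:ℝ) 1, HasDerivAt β (-(β x ^ 2 + lam ^ 2) / 2) x)
    (hβ0 : β 0 = 0)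
    (hblowup₁ : Tendsto β (nhdsWithin 1 (Iio 1)) atBot)
    (hblowup₂ : Tendsto β (nhdsWithin (-1) (Ioi (-1))) atTop) :
    lam = π ∧
    (∀ x ∈ Ioo (-1:ℝ) 1, β x = -lam * Real.tan (lam * x / 2)) ∧
    (∀ x ∈ Ioo (-1:ℝ) 1, β x = -π * Real.tan (π * x / 2)) ∧
    (∀ x ∈ Ioo (-1:ℝ) 1,
      HasDerivAt (fun y => Real.log (Real.cos (π * y / 2) ^ 2)) (β x) x) ∧
    (∫ x in (-1:ℝ)..1, Real.cos (π * x / 2) ^ 2) = 1 := by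
  have hlam0 : lam ≠ 0 := ne_of_gt hlam
  -- F x = arctan (β x / lam) + (lam/2) x has zero derivative on Ioo (-1) 1
  set F : ℝ → ℝ := fun x => Real.arctan (β x / lam) + lam / 2 * x with hF
  have hFderiv : ∀ x ∈ Ioo (-1:ℝ) 1, HasDerivAt F 0 x := by
    intro x hx
    have hb := (hODE x hx).div_const lam
    have harc := hb.arctan
    have hlin : HasDerivAt (fun y : ℝ => lam / 2 * y) (lam / 2) x := by
      simpa using (hasDerivAt_id x).const_mul (lam / 2)
    have := harc.add hlin
    have hval : 1 / (1 + (β x / lam) ^ 2) * (-(β x ^ 2 + lam ^ 2) / 2 / lam) + lam / 2 = 0 := by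
      have hpos : (0:ℝ) < 1 + (β x / lam) ^ 2 := by positivity
      field_simp
      ring
    rw [hval] at this
    exact this
  -- constancy of F
  have hIoo : Convex ℝ (Ioo (-1:ℝ) 1) := convex_Ioo _ _
  have hopen : IsOpen (Ioo (-1:ℝ) 1) := isOpen_Ioo
  have hconst : ∀ x ∈ Ioo (-1:ℝ) 1, F x = F 0 := by
    intro x hx
    have h0 : (0:ℝ) ∈ Ioo (-1:ℝ) 1 := by norm_num
    refine hIoo.is_const_of_fderivWithin_eq_zero (𝕜 := ℝ)
      (fun y hy => ((hFderiv y hy).differentiableAt).differentiableWithinAt) ?_ hx h0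
    intro y hy
    have h1 : fderivWithin ℝ F (Ioo (-1:ℝ) 1) y = fderiv ℝ F y :=
      fderivWithin_of_isOpen hopen hy
    rw [h1, (hFderiv y hy).hasFDerivAt.fderiv]
    ext t
    simp
  have hF0 : F 0 = 0 := by simp [hF, hβ0]
  -- arctan formula
  have harctan : ∀ x ∈ Ioo (-1:ℝ) 1, Real.arctan (β x / lam) = -(lam / 2 * x) := by
    intro x hx
    have := hconst x hx
    rw [hF0] at this
    simp only [hF] at this
    linarith
  -- solution formula
  have hsol : ∀ x ∈ Ioo (-1:ℝ) 1, β x = -lam * Real.tan (lam * x / 2) := by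
    intro x hx
    have h := harctan x hx
    have := congrArg Real.tan h
    rw [Real.tan_arctan] at this
    have h2 : β x = lam * Real.tan (-(lam / 2 * x)) := by
      field_simp at this ⊢
      linarith [this]
    rw [Real.tan_neg] at h2
    rw [h2]; ring_nf
  -- lam ≤ π
  have hle : lam ≤ π := by
    by_contra hc
    push_neg at hc
    have hx : π / lam ∈ Ioo (-1:ℝ) 1 := by
      constructor
      · have : (0:ℝ) < π / lam := by positivity
        linarith
      · rw [div_lt_one hlam]; exact hc
    have h := harctan _ hx
    have : -(lam / 2 * (π / lam)) = -(π / 2) := by field_simp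
    rw [this] at h
    have := Real.neg_pi_div_two_lt_arctan (β (π / lam) / lam)
    linarith
  -- lam = π
  have hlampi : lam = π := by
    rcases lt_or_eq_of_le hle with hlt | heq
    · exfalso
      have hcosne : Real.cos (lam / 2) ≠ 0 := by
        have : lam / 2 ∈ Ioo (-(π/2)) (π/2) := by constructor <;> [linarith; linarith]
        exact ne_of_gt (Real.cos_pos_of_mem_Ioo this)
      have hcont : Tendsto (fun x => -lam * Real.tan (lam * x / 2))
          (nhdsWithin 1 (Iio 1)) (nhds (-lam * Real.tan (lam / 2))) := by
        have h1 : ContinuousAt Real.tan (lam * 1 / 2) :=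
          Real.continuousAt_tan.2 (by simpa using hcosne)
        have h2 : ContinuousAt (fun x : ℝ => lam * x / 2) 1 := by fun_prop
        have h3 : ContinuousAt (fun x => -lam * Real.tan (lam * x / 2)) 1 :=
          continuousAt_const.mul
            (ContinuousAt.comp (f := fun x : ℝ => lam * x / 2) h1 h2)
        have h4 : ContinuousWithinAt (fun x => -lam * Real.tan (lam * x / 2)) (Iio 1) 1 :=
          h3.continuousWithinAt
        simpa using h4.tendsto
      have heqev : ∀ᶠ x in nhdsWithin 1 (Iio 1), β x = -lam * Real.tan (lam * x / 2) := by
        filter_upwards [Ioo_mem_nhdsLT_of_mem (by norm_num : (1:ℝ) ∈ Ioc (-1:ℝ) 1)] with x hx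
        exact hsol x hx
      have htend : Tendsto β (nhdsWithin 1 (Iio 1)) (nhds (-lam * Real.tan (lam / 2))) :=
        hcont.congr' (heqev.mono fun x hx => hx.symm)
      exact not_tendsto_atBot_of_tendsto_nhds htend hblowup₁
    · exact heq
  have hcosne : ∀ x ∈ Ioo (-1:ℝ) 1, Real.cos (π * x / 2) ≠ 0 := by
    intro x hx
    refine ne_of_gt (Real.cos_pos_of_mem_Ioo ?_)
    obtain ⟨h1, h2⟩ := hx
    constructor
    · nlinarith [Real.pi_pos]
    · nlinarith [Real.pi_pos]
  have hsolpi : ∀ x ∈ Ioo (-1:ℝ) 1, β x = -π * Real.tan (π * x / 2) := by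
    intro x hx
    rw [hsol x hx, hlampi]
  refine ⟨hlampi, hsol, hsolpi, ?_, ?_⟩
  · -- log derivative
    intro x hx
    have hc : HasDerivAt (fun y : ℝ => π * y / 2) (π / 2) x := by
      have : HasDerivAt (fun y : ℝ => π / 2 * y) (π / 2) x := by
        simpa using (hasDerivAt_id x).const_mul (π / 2)
      convert this using 2 with y
      ring
    have hcos := hc.cos
    have hpow := hcos.pow 2
    have hne : Real.cos (π * x / 2) ^ 2 ≠ 0 := pow_ne_zero _ (hcosne x hx)
    have hlog := hpow.log hne
    convert hlog using 1
    · rfl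
    rw [hsolpi x hx, Real.tan_eq_sin_div_cos]
    have h := hcosne x hx
    simp only [Pi.pow_apply]
    push_cast
    field_simp
  · -- integral
    have key : ∀ x ∈ Icc (-1:ℝ) 1,
        HasDerivAt (fun y => y / 2 + Real.sin (π * y) / (2 * π))
          (Real.cos (π * x / 2) ^ 2) x := by
      intro x _
      have h1 : HasDerivAt (fun y : ℝ => y / 2) (1 / 2) x := by
        simpa using (hasDerivAt_id x).div_const 2
      have h2 : HasDerivAt (fun y : ℝ => π * y) π x := by
        simpa using (hasDerivAt_id x).const_mul π
      have h3 := (h2.sin).div_const (2 * π)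
      have h := h1.add h3
      have hval : 1 / 2 + Real.cos (π * x) * π / (2 * π) = Real.cos (π * x / 2) ^ 2 := by
        rw [Real.cos_sq]
        have hh : 2 * (π * x / 2) = π * x := by ring
        rw [hh]
        have := Real.pi_ne_zero
        field_simp
      rw [hval] at h
      exact h
    have hint := intervalIntegral.integral_eq_sub_of_hasDerivAt
      (f := fun y => y / 2 + Real.sin (π * y) / (2 * π)) (a := (-1:ℝ)) (b := 1)
      (fun x hx => key x
        (by rwa [uIcc_of_le (by norm_num : (-1:ℝ) ≤ 1)] at hx))
      (Continuous.intervalIntegrable (by fun_prop) _ _)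
    rw [hint]
    norm_num [Real.sin_pi, mul_neg_one, Real.sin_neg]
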